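/- (Risky-distance safety with reaction time.) Let a > 0, s > 0, c_r ≥ 0, and speeds v̂, v with 0 ≤ v̂ ≤ v ≤ 2·v̂. Suppose the leader moves at constant speed, P(t) = P₀ + v̂·t, and the follower first keeps its speed v for a reaction time τ = c_r·v/a (p(t) = p₀ + v·t on [0, τ]), then decelerates at rate a until its speed equals v̂ (p(t) = p(τ) + v·(t−τ) − (a/2)(t−τ)² on [τ, τ + (v−v̂)/a]), and thereafter moves at constant speed v̂. If the initial gap satisfies P₀ − p₀ ≥ s + c_r·v·v̂/a + (v − v̂)²/(2a), then P(t) − p(t) ≥ s for all t ≥ 0. -/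

import Mathlib

/-- Trajectory of the follower with reaction time: initial position `p₀`, initial
speed `v`; it keeps speed `v` during the reaction time `τ = c_r·v/a`, then brakes at
rate `a` until its speed equals the leader speed `v̂`, and thereafter moves at
constant speed `v̂`. -/
noncomputable def followerTraj (a cr p0 v vhat t : ℝ) : ℝ :=
  let τ := cr * v / a
  let t1 := τ + (v - vhat) / a
  if t ≤ τ then p0 + v * t
  else if t ≤ t1 then p0 + v * τ + v * (t - τ) - (a/2) * (t - τ)^2
  else p0 + v * τ + v * (t1 - τ) - (a/2) * (t1 - τ)^2 + vhat * (t - t1)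

set_option maxHeartbeats 1600000 in
/-- Risky-distance safety with reaction time: with speeds `0 ≤ v̂ ≤ v ≤ 2·v̂`,
a leader moving at constant speed `v̂` from `P₀`, and a follower with reaction time
`τ = c_r·v/a` as above, an initial gap of at least
`s + c_r·v·v̂/a + (v − v̂)²/(2a)` guarantees that the gap never drops below `s`. -/
theorem risky_distance_safety (a s cr P0 p0 vhat v : ℝ)
    (ha : 0 < a) (hs : 0 < s) (hcr : 0 ≤ cr)
    (hvhat : 0 ≤ vhat) (hvv : vhat ≤ v) (hv2 : v ≤ 2 * vhat)
    (hgap : P0 - p0 ≥ s + cr * v * vhat / a + (v - vhat)^2 / (2*a)) :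
    ∀ t ≥ (0:ℝ), (P0 + vhat * t) - followerTraj a cr p0 v vhat t ≥ s := by
  intro t ht
  have hane : a ≠ 0 := ne_of_gt ha
  have hv0 : 0 ≤ v := hvhat.trans hvv
  obtain ⟨τ, hτd⟩ : ∃ x, cr * v / a = x := ⟨_, rfl⟩
  obtain ⟨D, hDd⟩ : ∃ x, (v - vhat) / a = x := ⟨_, rfl⟩
  have hτ : a * τ = cr * v := by rw [← hτd]; field_simp
  have hD : a * D = v - vhat := by rw [← hDd]; field_simp
  have hD2 : a^2 * D^2 = (v - vhat)^2 := by nlinarith [hD]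
  have hgap' : a * (P0 - p0) ≥ a * s + cr * v * vhat + (v - vhat)^2 / 2 := by
    have h := mul_le_mul_of_nonneg_left hgap ha.le
    have e1 : a * (cr * v * vhat / a) = cr * v * vhat := by field_simp
    have e2 : a * ((v - vhat)^2 / (2*a)) = (v - vhat)^2 / 2 := by field_simp
    nlinarith [h, e1, e2]
  have hcrv : 0 ≤ cr * v * (2 * vhat - v) :=
    mul_nonneg (mul_nonneg hcr hv0) (by linarith)
  simp only [followerTraj, hτd, hDd]
  split_ifs with h1 h2
  · -- reaction phase: t ≤ τ
    have h1' : a * t ≤ cr * v := by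
      calc a * t ≤ a * τ := mul_le_mul_of_nonneg_left h1 ha.le
        _ = cr * v := hτ
    nlinarith [mul_nonneg (sub_nonneg.2 hvv) (sub_nonneg.2 h1'), sq_nonneg (v - vhat), ha, hgap', hcrv]
  · -- braking phase: τ < t ≤ τ + D
    have hu : 0 ≤ t - τ := by linarith [not_le.mp h1]
    have h2' : a * (t - τ) ≤ v - vhat := by nlinarith [mul_le_mul_of_nonneg_left h2 ha.le, hD]
    rw [ge_iff_le]
    have key : a * s ≤ a * ((P0 + vhat * t) -
        (p0 + v * τ + v * (t - τ) - (a/2) * (t - τ)^2)) := by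
      nlinarith [sq_nonneg (v - vhat - a * (t - τ)), hgap', hcrv, hτ, ha,
        mul_nonneg hu (sub_nonneg.2 h2')]
    exact le_of_mul_le_mul_left key ha
  · -- constant phase: t > τ + D
    rw [ge_iff_le]
    have key : a * s ≤ a * ((P0 + vhat * t) -
        (p0 + v * τ + v * (τ + D - τ) - (a/2) * (τ + D - τ)^2 + vhat * (t - (τ + D)))) := by
      have expand : a * ((P0 + vhat * t) -
          (p0 + v * τ + v * (τ + D - τ) - (a/2) * (τ + D - τ)^2 + vhat * (t - (τ + D)))) =
          a * (P0 - p0) - v * (a * τ) - v * (a * D) + (1/2) * (a^2 * D^2)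
            + vhat * (a * τ) + vhat * (a * D) := by ring
      rw [expand, hτ, hD, hD2]
      nlinarith [hgap', hcrv]
    exact le_of_mul_le_mul_left key ha
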